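/- Let P > 0, N > 0 be reals, let α satisfy P/(P+N) < α < 1, and let κ satisfy P ≤ κ < P/α. Then the two-dimensional Lebesgue measure of the feasible region S(α,κ) equals (2·κ·P − α·κ² − P²)/(2·N·P). (In this case S(α,κ) is the quadrilateral with vertices (0,0), ((1−α)·κ/N, α·κ/P), ((κ−P)/N, 1), and (0,1).) -/

import Mathlib

open MeasureTheory Set

lemma volume_cc_aux (f g : ℝ → ℝ) (hf : Measurable f) (hg : Measurable g) {s : Set ℝ}
    (hs : MeasurableSet s) :
    volume {p : ℝ × ℝ | p.1 ∈ s ∧ p.2 ∈ Set.Icc (f p.1) (g p.1)} =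
      ∫⁻ x in s, ENNReal.ofReal (g x - f x) := by
  classical
  rw [Measure.volume_eq_prod, Measure.prod_apply (measurableSet_region_between_cc hf hg hs)]
  have h : (fun x => volume {a | x ∈ s ∧ a ∈ Icc (f x) (g x)}) =
      s.indicator fun x => ENNReal.ofReal (g x - f x) := by
    funext x
    rw [Set.indicator_apply]
    split_ifs with h
    · have hx : {a | x ∈ s ∧ a ∈ Icc (f x) (g x)} = Icc (f x) (g x) := by
        ext a; simp [h]
      rw [hx, Real.volume_Icc]
    · have hx : {a | x ∈ s ∧ a ∈ Icc (f x) (g x)} = ∅ := by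
        ext a; simp [h]
      rw [hx, measure_empty]
  simp only [preimage_setOf_eq]
  rw [show (fun x => volume {a | x ∈ s ∧ a ∈ Icc (f x) (g x)}) =
      s.indicator fun x => ENNReal.ofReal (g x - f x) from h]
  exact lintegral_indicator hs _

set_option maxHeartbeats 1000000 in
theorem area_feasible_region_case2
    (P N α κ : ℝ) (hP : 0 < P) (hN : 0 < N)
    (hαlo : P / (P + N) < α) (hα1 : α < 1) (hκlo : P ≤ κ) (hκhi : κ < P / α) :
    volume {v : ℝ × ℝ | v.1 ∈ Set.Icc (0:ℝ) 1 ∧ v.2 ∈ Set.Icc (0:ℝ) 1 ∧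
        (1 - α) * P * v.2 ≥ α * N * v.1 ∧ P * v.2 + N * v.1 ≤ κ} =
      ENNReal.ofReal ((2 * κ * P - α * κ ^ 2 - P ^ 2) / (2 * N * P)) := by
  have hPN : 0 < P + N := by linarith
  have hα0 : 0 < α := lt_trans (div_pos hP hPN) hαlo
  have h1α : 0 < 1 - α := by linarith
  have hq : 0 < (1 - α) * P := mul_pos h1α hP
  have hκpos : 0 < κ := lt_of_lt_of_le hP hκlo
  -- α·κ < P
  have hακ : α * κ < P := by
    have h := (lt_div_iff₀ hα0).mp hκhi
    nlinarith
  -- (1-α)·P < α·N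
  have hprev : (1 - α) * P < α * N := by
    have := (div_lt_iff₀ hPN).mp hαlo
    nlinarith
  set c : ℝ := α * N / ((1 - α) * P) with hc_def
  have hc' : c * ((1 - α) * P) = α * N := div_mul_cancel₀ _ hq.ne'
  have hc0 : 0 ≤ c := div_nonneg (by positivity) hq.le
  set x1 : ℝ := (κ - P) / N with hx1_def
  set x2 : ℝ := (1 - α) * κ / N with hx2_def
  have hx1N : x1 * N = κ - P := div_mul_cancel₀ _ hN.ne'
  have hx2N : x2 * N = (1 - α) * κ := div_mul_cancel₀ _ hN.ne'
  have hx1nn : 0 ≤ x1 := div_nonneg (by linarith) hN.le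
  have hx2nn : 0 ≤ x2 := div_nonneg (by nlinarith) hN.le
  have hx12 : x1 ≤ x2 := by
    rw [div_le_div_iff_of_pos_right hN]
    nlinarith
  have hx2le1 : x2 ≤ 1 := by
    rw [div_le_one hN]
    nlinarith
  set F : ℝ → ℝ := fun x => max 0 (c * x) with hF_def
  set G : ℝ → ℝ := fun x => min 1 ((κ - N * x) / P) with hG_def
  have hFm : Measurable F := measurable_const.max (measurable_const.mul measurable_id)
  have hGm : Measurable G := by fun_prop
  have hFc : Continuous F := by fun_prop
  have hGc : Continuous G := by fun_prop
  have hset : {v : ℝ × ℝ | v.1 ∈ Set.Icc (0:ℝ) 1 ∧ v.2 ∈ Set.Icc (0:ℝ) 1 ∧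
        (1 - α) * P * v.2 ≥ α * N * v.1 ∧ P * v.2 + N * v.1 ≤ κ} =
      {p : ℝ × ℝ | p.1 ∈ Set.Icc (0:ℝ) 1 ∧ p.2 ∈ Set.Icc (F p.1) (G p.1)} := by
    ext ⟨x, y⟩
    simp only [Set.mem_setOf_eq, Set.mem_Icc, ge_iff_le]
    constructor
    · rintro ⟨⟨hx0, hx1'⟩, ⟨hy0, hy1⟩, h3, h4⟩
      refine ⟨⟨hx0, hx1'⟩, max_le hy0 ?_, le_min hy1 ?_⟩
      · rw [hc_def, div_mul_eq_mul_div, div_le_iff₀ hq]; nlinarith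
      · rw [le_div_iff₀ hP]; nlinarith
    · rintro ⟨⟨hx0, hx1'⟩, hFy, hyG⟩
      have h1 : (0:ℝ) ≤ y := le_trans (le_max_left _ _) hFy
      have h2 : c * x ≤ y := le_trans (le_max_right _ _) hFy
      have h3 : y ≤ 1 := le_trans hyG (min_le_left _ _)
      have h4 : y ≤ (κ - N * x) / P := le_trans hyG (min_le_right _ _)
      rw [le_div_iff₀ hP] at h4
      refine ⟨⟨hx0, hx1'⟩, ⟨h1, h3⟩, ?_, by nlinarith⟩
      have h5 := mul_le_mul_of_nonneg_right h2 hq.le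
      rw [mul_right_comm, hc'] at h5
      linarith
  rw [hset, volume_cc_aux F G hFm hGm measurableSet_Icc]
  -- split the domain at x2
  have hdisj : Disjoint (Icc (0:ℝ) x2) (Ioc x2 1) :=
    Set.disjoint_left.2 fun x hx hx' => absurd hx.2 (not_le.2 hx'.1)
  rw [show Icc (0:ℝ) 1 = Icc 0 x2 ∪ Ioc x2 1 from
      (Set.Icc_union_Ioc_eq_Icc hx2nn hx2le1).symm,
    lintegral_union measurableSet_Ioc hdisj]
  -- the part over (x2, 1] vanishes
  have hzero : ∫⁻ x in Ioc x2 1, ENNReal.ofReal (G x - F x) = 0 := by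
    have hz : ∀ x, x ∈ Ioc x2 1 → ENNReal.ofReal (G x - F x) = (fun _ => (0:ENNReal)) x := by
      intro x hx
      rw [ENNReal.ofReal_eq_zero]
      have hxx : x2 * N ≤ x * N := mul_le_mul_of_nonneg_right hx.1.le hN.le
      have h7 : c * x * P * (1 - α) = α * N * x := by
        rw [show c * x * P * (1 - α) = c * ((1 - α) * P) * x from by ring, hc']
      have h8 : (κ - N * x) * (1 - α) ≤ c * x * P * (1 - α) := by
        rw [h7]; nlinarith [hxx, hx2N]
      have key : κ - N * x ≤ c * x * P := le_of_mul_le_mul_right h8 h1α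
      have hG : G x ≤ (κ - N * x) / P := min_le_right _ _
      have hF : c * x ≤ F x := le_max_right _ _
      have : (κ - N * x) / P ≤ c * x := by rw [div_le_iff₀ hP]; exact key
      linarith
    rw [setLIntegral_congr_fun measurableSet_Ioc hz,
      lintegral_zero]
  rw [hzero, add_zero]
  -- pointwise bounds on [0, x2]
  have hFG : ∀ x ∈ Icc (0:ℝ) x2, F x ≤ G x := by
    intro x hx
    have hx0 : 0 ≤ x := hx.1
    have hxx2 : x ≤ x2 := hx.2
    have hxxN : x * N ≤ x2 * N := mul_le_mul_of_nonneg_right hxx2 hN.le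
    apply max_le
    · apply le_min zero_le_one
      apply div_nonneg _ hP.le
      nlinarith [hx2N]
    · apply le_min
      · have h9 : c * x * ((1 - α) * P) ≤ 1 * ((1 - α) * P) := by
          rw [show c * x * ((1 - α) * P) = c * ((1 - α) * P) * x from by ring, hc']
          have h10 : α * N * x ≤ α * N * x2 :=
            mul_le_mul_of_nonneg_left hxx2 (by positivity)
          have h11 : α * (x2 * N) = α * ((1 - α) * κ) := by rw [hx2N]
          have h12 : (1 - α) * (α * κ) ≤ (1 - α) * P :=
            mul_le_mul_of_nonneg_left hακ.le h1α.le
          nlinarith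
        exact le_of_mul_le_mul_right h9 hq
      · rw [le_div_iff₀ hP]
        have h7 : c * x * P * (1 - α) = α * N * x := by
          rw [show c * x * P * (1 - α) = c * ((1 - α) * P) * x from by ring, hc']
        have h8 : c * x * P * (1 - α) ≤ (κ - N * x) * (1 - α) := by
          rw [h7]; nlinarith [hxxN, hx2N]
        exact le_of_mul_le_mul_right h8 h1α
  -- convert to a Bochner integral
  have hint : IntegrableOn (fun x => G x - F x) (Icc 0 x2) volume :=
    (hGc.sub hFc).integrableOn_Icc
  have hae : 0 ≤ᵐ[volume.restrict (Icc (0:ℝ) x2)] fun x => G x - F x := by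
    filter_upwards [ae_restrict_mem measurableSet_Icc] with x hx
    exact sub_nonneg.2 (hFG x hx)
  rw [← ofReal_integral_eq_lintegral_ofReal hint hae]
  congr 1
  rw [MeasureTheory.integral_Icc_eq_integral_Ioc,
    ← intervalIntegral.integral_of_le hx2nn]
  have hI : ∀ a b : ℝ, IntervalIntegrable (fun x => G x - F x) volume a b :=
    fun a b => (hGc.sub hFc).intervalIntegrable a b
  rw [← intervalIntegral.integral_add_adjacent_intervals (hI 0 x1) (hI x1 x2)]
  have e1 : ∫ x in (0:ℝ)..x1, (G x - F x) = ∫ x in (0:ℝ)..x1, (1 - c * x) := by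
    apply intervalIntegral.integral_congr
    intro x hx
    rw [uIcc_of_le hx1nn] at hx
    have hFx : F x = c * x := max_eq_right (mul_nonneg hc0 hx.1)
    have hGx : G x = 1 := by
      apply min_eq_left
      rw [le_div_iff₀ hP]
      have := mul_le_mul_of_nonneg_right hx.2 hN.le
      rw [hx1N] at this
      linarith
    simp [hFx, hGx]
  have e2 : ∫ x in x1..x2, (G x - F x)
      = ∫ x in x1..x2, ((κ - N * x) / P - c * x) := by
    apply intervalIntegral.integral_congr
    intro x hx
    rw [uIcc_of_le hx12] at hx
    have hx0 : 0 ≤ x := le_trans hx1nn hx.1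
    have hFx : F x = c * x := max_eq_right (mul_nonneg hc0 hx0)
    have hGx : G x = (κ - N * x) / P := by
      apply min_eq_right
      rw [div_le_one hP]
      have := mul_le_mul_of_nonneg_right hx.1 hN.le
      rw [hx1N] at this
      linarith
    simp [hFx, hGx]
  rw [e1, e2]
  have hIc : IntervalIntegrable (fun x => c * x) volume 0 x1 :=
    (continuous_const.mul continuous_id).intervalIntegrable _ _
  have hIc2 : IntervalIntegrable (fun x => c * x) volume x1 x2 :=
    (continuous_const.mul continuous_id).intervalIntegrable _ _
  have hId : IntervalIntegrable (fun x => (κ - N * x) / P) volume x1 x2 :=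
    (Continuous.div_const (by fun_prop) P).intervalIntegrable _ _
  have hIN : IntervalIntegrable (fun x => N * x) volume x1 x2 := by
    apply Continuous.intervalIntegrable; fun_prop
  rw [intervalIntegral.integral_sub intervalIntegrable_const hIc,
    intervalIntegral.integral_sub hId hIc2,
    intervalIntegral.integral_const_mul, intervalIntegral.integral_const_mul,
    integral_id, integral_id, intervalIntegral.integral_const,
    intervalIntegral.integral_div,
    intervalIntegral.integral_sub intervalIntegrable_const hIN,
    intervalIntegral.integral_const, intervalIntegral.integral_const_mul,
    integral_id]
  simp only [smul_eq_mul]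
  rw [hx1_def, hx2_def, hc_def]
  field_simp
  ring
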